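/- Let r ≤ n and let c₁, …, c_r ∈ ℝⁿ be such that the vectors {c_k − c₁}_{k=2}^r are linearly independent. Define 𝔤_rad := { (S, v) ∈ ℝ^{n×n} × ℝⁿ : Sᵀ = −S and S c_i = −v for all i = 1, …, r }. Then: (a) 𝔤_rad is an ℝ-linear subspace of ℝ^{n×n} × ℝⁿ of dimension (n−r)(n−r+1)/2; and (b) for every continuously differentiable φ : ℝ^r → ℝ, setting F(x) := φ(‖x − c₁‖², …, ‖x − c_r‖²), every (S, v) ∈ 𝔤_rad satisfies DF(x)(S x + v) = 0 for all x ∈ ℝⁿ, where DF(x) is the Fréchet derivative of F at x. -/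

import Mathlib

open Matrix

/-- The radial-feature function `F(x) = φ(‖x−c₁‖², …, ‖x−c_r‖²)`. -/
noncomputable def radFeat {n r : ℕ} (c : Fin r → Fin n → ℝ)
    (φ : (Fin r → ℝ) → ℝ) : (Fin n → ℝ) → ℝ :=
  fun x => φ (fun i => ∑ j, (x j - c i j) ^ 2)

/-- For `r ≤ n` and points `c₁, …, c_r` with `{c_k − c₁}` linearly
independent, the set `𝔤_rad = {(S,v) : Sᵀ = −S, S cᵢ = −v}` is a linear subspace of
`ℝ^{n×n} × ℝⁿ` of dimension `(n−r)(n−r+1)/2`, and each of its elements annihilates every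
radial-feature function: `DF(x)(Sx + v) = 0` for all `x`. -/

-- cardinality of strict upper pairs
lemma card_pairs (M : ℕ) : Fintype.card {q : Fin M × Fin M // q.1 < q.2} = M * (M - 1) / 2 := by
  classical
  have e1 : {q : Fin M × Fin M // q.1 < q.2} ≃ Σ j : Fin M, Fin j.val :=
    { toFun := fun q => ⟨q.1.2, ⟨q.1.1, q.2⟩⟩
      invFun := fun s => ⟨(⟨s.2.val, s.2.isLt.trans s.1.isLt⟩, s.1), s.2.isLt⟩
      left_inv := fun q => by ext <;> simp
      right_inv := fun s => by ext <;> simp }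
  rw [Fintype.card_congr e1]
  rw [Fintype.card_sigma]
  simp only [Fintype.card_fin]
  rw [show (∑ x : Fin M, (x : ℕ)) = ∑ i ∈ Finset.range M, i from
    Fin.sum_univ_eq_sum_range (fun i => i) M]
  exact Finset.sum_range_id M

-- index type for the strictly-upper entries outside the first m rows
lemma card_iota (n m : ℕ) :
    Fintype.card {p : Fin n × Fin n // m ≤ (p.1 : ℕ) ∧ p.1 < p.2} = (n - m) * (n - m - 1) / 2 := by
  classical
  have e : {q : Fin (n-m) × Fin (n-m) // q.1 < q.2} ≃
      {p : Fin n × Fin n // m ≤ (p.1 : ℕ) ∧ p.1 < p.2} :=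
    { toFun := fun q => ⟨(⟨m + q.1.1, by omega⟩, ⟨m + q.1.2, by omega⟩),
        ⟨by simp, Fin.mk_lt_mk.mpr (Nat.add_lt_add_left q.2 m)⟩⟩
      invFun := fun p => ⟨(⟨p.1.1 - m, by omega⟩, ⟨p.1.2 - m, by
          have h1 := p.2.1; have h2 := p.2.2; have := p.1.2.isLt; omega⟩),
        by have h1 := p.2.1; have h2 : (p.1.1 : ℕ) < p.1.2 := p.2.2; simp [Fin.lt_def]; omega⟩
      left_inv := fun q => by
        ext <;> simp
      right_inv := fun p => by
        have h1 := p.2.1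
        have h2 : (p.1.1 : ℕ) < (p.1.2 : ℕ) := p.2.2
        ext <;> simp <;> omega }
  rw [← Fintype.card_congr e, card_pairs]

lemma exists_basis_extend {n m : ℕ} (hm : m ≤ n) (d : Fin m → (Fin n → ℝ))
    (hd : LinearIndependent ℝ d) :
    ∃ b : Module.Basis (Fin n) ℝ (Fin n → ℝ), ∀ k : Fin m, b (Fin.castLE hm k) = d k := by
  classical
  have hd' : LinearIndepOn ℝ id (Set.range d) := (linearIndepOn_id_range_iff hd.injective).mpr hd
  haveI : Fintype (hd'.extend (Set.subset_univ _)) :=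
    FiniteDimensional.fintypeBasisIndex (Module.Basis.extend hd')
  have hcard : Fintype.card (hd'.extend (Set.subset_univ _)) = n := by
    have h1 := Module.finrank_eq_card_basis (Module.Basis.extend hd')
    rw [Module.finrank_fintype_fun_eq_card, Fintype.card_fin] at h1
    omega
  have hsub : Set.range d ⊆ hd'.extend (Set.subset_univ _) := hd'.subset_extend _
  set f : Fin n → (Fin n → ℝ) := fun i => if h : (i : ℕ) < m then d ⟨i, h⟩ else 0 with hf
  have hmapsto : Set.MapsTo f {i : Fin n | (i : ℕ) < m}
      ((hd'.extend (Set.subset_univ _)).toFinset : Finset (Fin n → ℝ)) := by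
    intro i hi
    simp only [Set.mem_setOf_eq] at hi
    simp only [hf, dif_pos hi]
    rw [Finset.mem_coe, Set.mem_toFinset]
    exact hsub ⟨_, rfl⟩
  have hinj : Set.InjOn f {i : Fin n | (i : ℕ) < m} := by
    intro i hi j hj hij
    simp only [Set.mem_setOf_eq] at hi hj
    simp only [hf, dif_pos hi, dif_pos hj] at hij
    have := hd.injective hij
    simpa [Fin.ext_iff] using congrArg Fin.val this
  have hcard' : Fintype.card (Fin n) = (hd'.extend (Set.subset_univ _)).toFinset.card := by
    rw [Fintype.card_fin, Set.toFinset_card, hcard]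
  obtain ⟨g, hg⟩ := Set.MapsTo.exists_equiv_extend_of_card_eq hcard' hmapsto hinj
  let e2 : ((hd'.extend (Set.subset_univ _)).toFinset : Finset (Fin n → ℝ)) ≃
      (hd'.extend (Set.subset_univ _) : Set (Fin n → ℝ)) :=
    Equiv.subtypeEquivRight (fun x => Set.mem_toFinset)
  let e : Fin n ≃ (hd'.extend (Set.subset_univ _) : Set (Fin n → ℝ)) := g.trans e2
  refine ⟨(Module.Basis.extend hd').reindex e.symm, fun k => ?_⟩
  rw [Module.Basis.reindex_apply, Equiv.symm_symm, Module.Basis.extend_apply_self]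
  have h3 : ((e (Fin.castLE hm k)) : Fin n → ℝ) = f (Fin.castLE hm k) := by
    have := hg (Fin.castLE hm k) (by simpa using k.isLt)
    simpa [e, e2] using this
  rw [h3, hf]
  simp only []
  rw [dif_pos (show ((Fin.castLE hm k : Fin n) : ℕ) < m from k.isLt)]
  exact congrArg d (Fin.ext rfl)

/-- Skew matrices annihilating the vectors `d k`. -/
def skewKer {n m : ℕ} (d : Fin m → (Fin n → ℝ)) : Submodule ℝ (Matrix (Fin n) (Fin n) ℝ) where
  carrier := {S | Sᵀ = -S ∧ ∀ k, S.mulVec (d k) = 0}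
  add_mem' := by
    rintro S T ⟨hS1, hS2⟩ ⟨hT1, hT2⟩
    refine ⟨by rw [Matrix.transpose_add, hS1, hT1]; abel, fun k => ?_⟩
    rw [Matrix.add_mulVec, hS2 k, hT2 k, add_zero]
  zero_mem' := ⟨by simp, fun k => by simp⟩
  smul_mem' := by
    rintro a S ⟨hS1, hS2⟩
    refine ⟨by rw [Matrix.transpose_smul, hS1, smul_neg], fun k => ?_⟩
    rw [Matrix.smul_mulVec, hS2 k, smul_zero]

lemma skewKer_finrank {n m : ℕ} (hm : m ≤ n) (d : Fin m → (Fin n → ℝ))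
    (hd : LinearIndependent ℝ d) :
    Module.finrank ℝ (skewKer d) = (n - m) * (n - m - 1) / 2 := by
  classical
  obtain ⟨b, hb⟩ := exists_basis_extend hm d hd
  set A : Matrix (Fin n) (Fin n) ℝ := Matrix.of (fun i j => b j i) with hA
  have hAtm : A = (Pi.basisFun ℝ (Fin n)).toMatrix ⇑b := by
    ext i j
    simp [hA, Module.Basis.toMatrix_apply, Pi.basisFun_repr]
  have hdet : IsUnit A.det := by
    rw [hAtm]
    have : Invertible ((Pi.basisFun ℝ (Fin n)).toMatrix ⇑b) :=
      (Pi.basisFun ℝ (Fin n)).invertibleToMatrix b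
    exact Matrix.isUnit_det_of_invertible _
  have hA1 : A * A⁻¹ = 1 := Matrix.mul_nonsing_inv A hdet
  have hA2 : A⁻¹ * A = 1 := Matrix.nonsing_inv_mul A hdet
  have hAT1 : Aᵀ * (A⁻¹)ᵀ = 1 := by rw [← Matrix.transpose_mul, hA2, Matrix.transpose_one]
  have hAT2 : (A⁻¹)ᵀ * Aᵀ = 1 := by rw [← Matrix.transpose_mul, hA1, Matrix.transpose_one]
  have hconjS : ∀ S : Matrix (Fin n) (Fin n) ℝ, (A⁻¹)ᵀ * (Aᵀ * S * A) * A⁻¹ = S := by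
    intro S
    simp only [Matrix.mul_assoc]
    rw [hA1, Matrix.mul_one, ← Matrix.mul_assoc, hAT2, Matrix.one_mul]
  have hconjT : ∀ T : Matrix (Fin n) (Fin n) ℝ, Aᵀ * ((A⁻¹)ᵀ * T * A⁻¹) * A = T := by
    intro T
    simp only [Matrix.mul_assoc]
    rw [hA2, Matrix.mul_one, ← Matrix.mul_assoc, hAT1, Matrix.one_mul]
  -- columns of A with index < m are the d's
  have hAcol : ∀ (k : Fin n) (hk : (k : ℕ) < m) (j : Fin n), A j k = d ⟨k, hk⟩ j := by
    intro k hk j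
    have hcast : Fin.castLE hm ⟨(k : ℕ), hk⟩ = k := Fin.ext rfl
    show b k j = _
    rw [← hb ⟨(k : ℕ), hk⟩, hcast]
  -- column-vanishing for conjugated matrices
  have hcolzero : ∀ S : Matrix (Fin n) (Fin n) ℝ, (∀ k, S.mulVec (d k) = 0) →
      ∀ (i k : Fin n), (k : ℕ) < m → (Aᵀ * S * A) i k = 0 := by
    intro S hS i k hk
    have : (Aᵀ * S * A) i k = ((Aᵀ * S).mulVec (d ⟨k, hk⟩)) i := by
      rw [Matrix.mul_apply, Matrix.mulVec]
      simp only [dotProduct]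
      exact Finset.sum_congr rfl (fun j _ => by rw [hAcol k hk j])
    rw [this, ← Matrix.mulVec_mulVec, hS, Matrix.mulVec_zero]
    rfl
  set ι := {p : Fin n × Fin n // m ≤ (p.1 : ℕ) ∧ p.1 < p.2} with hι
  let Φ : skewKer d →ₗ[ℝ] (ι → ℝ) :=
    { toFun := fun S => fun p => (Aᵀ * S.val * A) p.1.1 p.1.2
      map_add' := fun S T => by
        funext p
        simp [Matrix.mul_add, Matrix.add_mul]
      map_smul' := fun a S => by
        funext p
        simp [Matrix.mul_smul, Matrix.smul_mul] }
  have hinj : Function.Injective Φ := by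
    rw [injective_iff_map_eq_zero]
    intro S hS0
    have hT0 : ∀ p : ι, (Aᵀ * S.val * A) p.1.1 p.1.2 = 0 := fun p => congrFun hS0 p
    set T := Aᵀ * S.val * A with hT
    have hTskew : Tᵀ = -T := by
      rw [hT, Matrix.transpose_mul, Matrix.transpose_mul, Matrix.transpose_transpose, S.2.1]
      rw [Matrix.neg_mul, Matrix.mul_neg, Matrix.mul_assoc]
    have hTs : ∀ i j, T i j = -T j i := by
      intro i j
      have := congrFun (congrFun hTskew j) i
      simpa [Matrix.transpose_apply, Matrix.neg_apply] using this
    have hTcol : ∀ (i k : Fin n), (k : ℕ) < m → T i k = 0 :=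
      fun i k hk => hcolzero S.val S.2.2 i k hk
    have hTe : ∀ i j, T i j = 0 := by
      intro i j
      rcases lt_trichotomy i j with hij | hij | hij
      · by_cases him : m ≤ (i : ℕ)
        · exact hT0 ⟨(i, j), ⟨him, hij⟩⟩
        · rw [hTs i j, hTcol j i (by omega), neg_zero]
      · subst hij
        have := hTs i i
        linarith
      · by_cases hjm : (j : ℕ) < m
        · exact hTcol i j hjm
        · have hjm' : m ≤ (j : ℕ) := by omega
          have h1 : T j i = 0 := hT0 ⟨(j, i), ⟨hjm', hij⟩⟩
          rw [hTs i j, h1, neg_zero]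
    have hTzero : T = 0 := by
      ext i j
      rw [hTe i j, Matrix.zero_apply]
    have hSzero : S.val = 0 := by
      have h := hconjS S.val
      rw [← hT, hTzero] at h
      simpa using h.symm
    exact Subtype.ext hSzero
  have hsurj : Function.Surjective Φ := by
    intro f
    set Tf : Matrix (Fin n) (Fin n) ℝ := Matrix.of (fun i j =>
      (if h : m ≤ (i : ℕ) ∧ i < j then f ⟨(i, j), h⟩ else 0)
        - (if h : m ≤ (j : ℕ) ∧ j < i then f ⟨(j, i), h⟩ else 0)) with hTf
    have hTfskew : Tfᵀ = -Tf := by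
      ext i j
      simp only [Matrix.transpose_apply, Matrix.neg_apply, hTf, Matrix.of_apply]
      ring
    have hTfcol : ∀ (i k : Fin n), (k : ℕ) < m → Tf i k = 0 := by
      intro i k hk
      simp only [hTf, Matrix.of_apply]
      rw [dif_neg, dif_neg, sub_zero]
      · intro h
        have h2 := Fin.lt_def.mp h.2
        have h1 := h.1
        omega
      · intro h
        have h2 := Fin.lt_def.mp h.2
        have h1 := h.1
        omega
    set S : Matrix (Fin n) (Fin n) ℝ := (A⁻¹)ᵀ * Tf * A⁻¹ with hSdef
    have hconj : Aᵀ * S * A = Tf := hconjT Tf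
    have hSskew : Sᵀ = -S := by
      rw [hSdef, Matrix.transpose_mul, Matrix.transpose_mul, Matrix.transpose_transpose,
        hTfskew]
      rw [Matrix.neg_mul, Matrix.mul_neg, Matrix.mul_assoc]
    have hSker : ∀ k, S.mulVec (d k) = 0 := by
      intro k
      have hsingle : A.mulVec (Pi.single (Fin.castLE hm k) 1) = d k := by
        funext i
        rw [Matrix.mulVec, dotProduct]
        rw [Finset.sum_eq_single (Fin.castLE hm k)]
        · rw [Pi.single_eq_same, mul_one]
          have hlt : ((Fin.castLE hm k : Fin n) : ℕ) < m := k.isLt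
          rw [hAcol _ hlt]
          exact congrFun (congrArg d (Fin.ext rfl)) i
        · intro j _ hj
          rw [Pi.single_eq_of_ne hj, mul_zero]
        · intro h; exact absurd (Finset.mem_univ _) h
      have hinv : A⁻¹.mulVec (d k) = Pi.single (Fin.castLE hm k) 1 := by
        rw [← hsingle, Matrix.mulVec_mulVec, hA2, Matrix.one_mulVec]
      have hTfsingle : Tf.mulVec (Pi.single (Fin.castLE hm k) 1) = 0 := by
        funext i
        rw [Matrix.mulVec, dotProduct]
        rw [Finset.sum_eq_single (Fin.castLE hm k)]
        · rw [Pi.single_eq_same, mul_one]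
          exact hTfcol i _ k.isLt
        · intro j _ hj
          rw [Pi.single_eq_of_ne hj, mul_zero]
        · intro h; exact absurd (Finset.mem_univ _) h
      rw [hSdef, Matrix.mul_assoc, ← Matrix.mulVec_mulVec, ← Matrix.mulVec_mulVec, hinv,
        hTfsingle, Matrix.mulVec_zero]
    refine ⟨⟨S, hSskew, hSker⟩, ?_⟩
    funext p
    show (Aᵀ * S * A) p.1.1 p.1.2 = f p
    rw [hconj]
    simp only [hTf, Matrix.of_apply]
    rw [dif_pos p.2, dif_neg, sub_zero]
    intro h
    exact absurd p.2.2 (lt_asymm h.2)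
  have hequiv := LinearEquiv.ofBijective Φ ⟨hinj, hsurj⟩
  rw [hequiv.finrank_eq, Module.finrank_fintype_fun_eq_card]
  exact card_iota n m

def gRad (n r : ℕ) (c : Fin r → Fin n → ℝ) :
    Submodule ℝ (Matrix (Fin n) (Fin n) ℝ × (Fin n → ℝ)) where
  carrier := {p | (p.1)ᵀ = -p.1 ∧ ∀ i : Fin r, p.1.mulVec (c i) = -p.2}
  add_mem' := by
    rintro ⟨S, v⟩ ⟨T, w⟩ ⟨h1, h2⟩ ⟨h3, h4⟩
    refine ⟨by simp only [Prod.fst_add, Matrix.transpose_add, h1, h3]; abel, fun i => ?_⟩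
    show (S + T).mulVec (c i) = -(v + w)
    rw [Matrix.add_mulVec, h2 i, h4 i]
    abel
  zero_mem' := ⟨by simp, fun i => by simp⟩
  smul_mem' := by
    rintro a ⟨S, v⟩ ⟨h1, h2⟩
    refine ⟨by simp only [Prod.smul_fst, Matrix.transpose_smul, h1, smul_neg], fun i => ?_⟩
    show (a • S).mulVec (c i) = -(a • v)
    rw [Matrix.smul_mulVec, h2 i, smul_neg]

theorem parta (n r : ℕ) (hrn : r ≤ n) (c : Fin r → Fin n → ℝ)
    (hLI : LinearIndependent ℝ
      (fun k : {i : Fin r // 0 < (i : ℕ)} => c k.1 - c ⟨0, k.1.pos⟩)) :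
    Module.finrank ℝ (gRad n r c) = (n - r) * (n - r + 1) / 2 := by
  classical
  rcases r with _ | m
  · -- r = 0
    let d0 : Fin 0 → (Fin n → ℝ) := Fin.elim0
    let e : gRad n 0 c ≃ₗ[ℝ] (skewKer d0 × (Fin n → ℝ)) :=
      { toFun := fun p => (⟨p.1.1, ⟨p.2.1, fun k => k.elim0⟩⟩, p.1.2)
        map_add' := fun p q => rfl
        map_smul' := fun a p => rfl
        invFun := fun q => ⟨(q.1.val, q.2), ⟨q.1.2.1, fun i => i.elim0⟩⟩
        left_inv := fun p => rfl
        right_inv := fun q => rfl }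
    rw [e.finrank_eq, Module.finrank_prod, skewKer_finrank (Nat.zero_le n) d0
      linearIndependent_empty_type, Module.finrank_fintype_fun_eq_card, Fintype.card_fin]
    rcases n with _ | k
    · simp
    simp only [Nat.sub_zero, Nat.add_sub_cancel]
    obtain ⟨t, ht⟩ := Nat.even_mul_succ_self k
    have h1 : (k + 1) * k = 2 * t := by
      rw [Nat.mul_comm, ht, two_mul]
    have h2 : (k + 1) * (k + 1 + 1) = 2 * t + 2 * (k + 1) := by
      have e2 : (k + 1) * (k + 1 + 1) = k * (k + 1) + 2 * (k + 1) := by ring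
      rw [e2, ht]
      omega
    rw [h1, h2]
    omega
  · -- r = m + 1
    have hmn : m ≤ n := by omega
    set d : Fin m → (Fin n → ℝ) := fun k => c k.succ - c 0 with hdd
    let e0 : Fin m ≃ {i : Fin (m + 1) // 0 < (i : ℕ)} :=
      { toFun := fun k => ⟨k.succ, by simp⟩
        invFun := fun i => ⟨((i : {i : Fin (m + 1) // 0 < (i : ℕ)}).1 : ℕ) - 1, by
          have h1 := i.1.isLt; have h2 := i.2; omega⟩
        left_inv := fun k => by
          apply Fin.ext
          simp [Fin.val_succ]
        right_inv := fun i => by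
          apply Subtype.ext
          apply Fin.ext
          have h1 := i.1.isLt
          have h2 := i.2
          simp only [Fin.val_succ]
          omega }
    have hd : LinearIndependent ℝ d := by
      have h := hLI.comp e0 e0.injective
      have heq : ((fun k : {i : Fin (m + 1) // 0 < (i : ℕ)} => c k.1 - c ⟨0, k.1.pos⟩) ∘ e0) = d := by
        funext k
        have h0 : (⟨0, (e0 k).1.pos⟩ : Fin (m + 1)) = 0 := Fin.ext (by simp)
        show c (e0 k).1 - c ⟨0, (e0 k).1.pos⟩ = c k.succ - c 0
        rw [h0]
        rfl
      rwa [heq] at h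
    let e : gRad n (m + 1) c ≃ₗ[ℝ] skewKer d :=
      { toFun := fun p => ⟨p.1.1, ⟨p.2.1, fun k => by
          have h1 := p.2.2 k.succ
          have h2 := p.2.2 0
          show p.1.1.mulVec (c k.succ - c 0) = 0
          rw [Matrix.mulVec_sub, h1, h2]
          abel⟩⟩
        map_add' := fun p q => rfl
        map_smul' := fun a p => rfl
        invFun := fun S => ⟨(S.val, -S.val.mulVec (c 0)), ⟨S.2.1, fun i => by
          show S.val.mulVec (c i) = - -S.val.mulVec (c 0)
          rw [neg_neg]
          refine Fin.cases rfl (fun k => ?_) i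
          have h := S.2.2 k
          have h' : S.val.mulVec (c k.succ) - S.val.mulVec (c 0) = 0 := by
            rw [← Matrix.mulVec_sub]
            exact h
          exact sub_eq_zero.mp h'⟩⟩
        left_inv := fun p => by
          apply Subtype.ext
          apply Prod.ext
          · rfl
          · show -p.1.1.mulVec (c 0) = p.1.2
            rw [p.2.2 0, neg_neg]
        right_inv := fun S => rfl }
    rw [e.finrank_eq, skewKer_finrank hmn d hd]
    have h1 : n - m = (n - (m + 1)) + 1 := by omega
    rw [h1, Nat.add_sub_cancel, Nat.mul_comm]

theorem partb {n r : ℕ} (c : Fin r → Fin n → ℝ)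
    (φ : (Fin r → ℝ) → ℝ) (hφ : ContDiff ℝ 1 φ)
    (S : Matrix (Fin n) (Fin n) ℝ) (v : Fin n → ℝ)
    (hS : Sᵀ = -S) (hc : ∀ i : Fin r, S.mulVec (c i) = -v)
    (x : Fin n → ℝ) : fderiv ℝ (radFeat c φ) x (S.mulVec x + v) = 0 := by
  classical
  set q : (Fin n → ℝ) → (Fin r → ℝ) := fun x i => ∑ j, (x j - c i j) ^ 2 with hq
  set L : (Fin n → ℝ) →L[ℝ] (Fin r → ℝ) :=
    ContinuousLinearMap.pi (fun i => ∑ j, (2 * (x j - c i j)) • (ContinuousLinearMap.proj j)) with hL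
  have hqd : HasFDerivAt q L x := by
    apply hasFDerivAt_pi.mpr
    intro i
    have : HasFDerivAt (fun y : Fin n → ℝ => ∑ j, (y j - c i j) ^ 2)
        (∑ j, (2 * (x j - c i j)) • (ContinuousLinearMap.proj j : (Fin n → ℝ) →L[ℝ] ℝ)) x := by
      apply HasFDerivAt.fun_sum
      intro j _
      have h1 : HasFDerivAt (fun y : Fin n → ℝ => y j - c i j)
          (ContinuousLinearMap.proj j : (Fin n → ℝ) →L[ℝ] ℝ) x :=
        (hasFDerivAt_apply j x).sub_const (c i j)
      have h2 := h1.fun_mul h1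
      have h3 : HasFDerivAt (fun y : Fin n → ℝ => (y j - c i j) ^ 2)
          ((x j - c i j) • (ContinuousLinearMap.proj j : (Fin n → ℝ) →L[ℝ] ℝ)
            + (x j - c i j) • ContinuousLinearMap.proj j) x := by
        simpa [pow_two] using h2
      have h4 : ((x j - c i j) • (ContinuousLinearMap.proj j : (Fin n → ℝ) →L[ℝ] ℝ)
            + (x j - c i j) • ContinuousLinearMap.proj j)
          = (2 * (x j - c i j)) • (ContinuousLinearMap.proj j : (Fin n → ℝ) →L[ℝ] ℝ) := by
        ext w; simp [two_mul]; ring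
      rwa [h4] at h3
    simpa using this
  have hφd : HasFDerivAt φ (fderiv ℝ φ (q x)) (q x) :=
    ((hφ.differentiable one_ne_zero) (q x)).hasFDerivAt
  have hF : HasFDerivAt (radFeat c φ) ((fderiv ℝ φ (q x)).comp L) x := hφd.comp x hqd
  rw [hF.fderiv]
  have hLz : L (S.mulVec x + v) = 0 := by
    funext i
    have hu : S.mulVec x + v = S.mulVec (x - c i) := by
      rw [Matrix.mulVec_sub, hc i]; abel
    have hskew : (x - c i) ⬝ᵥ S.mulVec (x - c i) = 0 := by
      set y := x - c i
      have h1 : y ⬝ᵥ S.mulVec y = -(y ⬝ᵥ S.mulVec y) := by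
        calc y ⬝ᵥ S.mulVec y = (Sᵀ.mulVec y) ⬝ᵥ y := by
              rw [Matrix.dotProduct_mulVec, Matrix.mulVec_transpose]
          _ = -(y ⬝ᵥ S.mulVec y) := by
              rw [hS, Matrix.neg_mulVec, neg_dotProduct, dotProduct_comm]
      linarith
    rw [hu]
    simp only [hL, ContinuousLinearMap.pi_apply, ContinuousLinearMap.sum_apply,
      ContinuousLinearMap.smul_apply, ContinuousLinearMap.proj_apply, Pi.zero_apply]
    have : ∑ j, (2 * (x j - c i j)) • (S.mulVec (x - c i)) j
        = 2 * ((x - c i) ⬝ᵥ S.mulVec (x - c i)) := by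
      simp [dotProduct, Finset.mul_sum, smul_eq_mul]; ring_nf
    rw [this, hskew, mul_zero]
  rw [ContinuousLinearMap.comp_apply, hLz]
  simp

theorem stmt10 (n r : ℕ) (hrn : r ≤ n) (c : Fin r → Fin n → ℝ)
    (hLI : LinearIndependent ℝ
      (fun k : {i : Fin r // 0 < (i : ℕ)} => c k.1 - c ⟨0, k.1.pos⟩)) :
    ∃ g : Submodule ℝ (Matrix (Fin n) (Fin n) ℝ × (Fin n → ℝ)),
      (g : Set (Matrix (Fin n) (Fin n) ℝ × (Fin n → ℝ)))
        = {p | (p.1)ᵀ = -p.1 ∧ ∀ i : Fin r, p.1.mulVec (c i) = -p.2} ∧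
      Module.finrank ℝ g = (n - r) * (n - r + 1) / 2 ∧
      ∀ φ : (Fin r → ℝ) → ℝ, ContDiff ℝ 1 φ →
        ∀ (S : Matrix (Fin n) (Fin n) ℝ) (v : Fin n → ℝ),
          Sᵀ = -S → (∀ i : Fin r, S.mulVec (c i) = -v) →
          ∀ x : Fin n → ℝ, fderiv ℝ (radFeat c φ) x (S.mulVec x + v) = 0 := by
  refine ⟨gRad n r c, rfl, parta n r hrn c hLI, ?_⟩
  intro φ hφ S v hS hc x
  exact partb c φ hφ S v hS hc x
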